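/- (Stochastic Gronwall, upper bound variant.) Let (X_t) be an adapted process on a filtered probability space satisfying X_{t+1} = (1+α) X_t + ξ_{t+1} + Z_{t+1}, X₀ = x₀ > 0, with α > 0 fixed, (ξ_t) adapted, and (Z_t) a martingale difference sequence. Let x₀⁺ ≥ x₀ and set x_t⁺ := (1+α)^t x₀⁺. Let T ∈ ℕ, δ ∈ (0,1). Suppose there exist δ_ξ ∈ (0,1) and Ξ, σ > 0 such that for every t, on the event {X_s ≤ 2 x_s⁺ for all s ≤ t}: P( |ξ_{t+1}| > (1+α)^t Ξ | F_t ) ≤ δ_ξ and E[Z_{t+1}² | F_t] ≤ (1+α)^t σ². If Ξ ≤ x₀⁺/(4T) and σ² ≤ δ α (x₀⁺)²/16, then with probability at least 1 − δ − T δ_ξ, X_t ≤ 2 x_t⁺ for all t ∈ [T]. -/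

import Mathlib

open MeasureTheory

noncomputable section

/-- Product of two L² functions is integrable. -/
lemma sg_integrable_mul {Ω : Type*} {m0 : MeasurableSpace Ω} {μ : Measure Ω}
    {f g : Ω → ℝ} (hf : MemLp f 2 μ) (hg : MemLp g 2 μ) :
    Integrable (fun ω => f ω * g ω) μ := by
  have h1 : Integrable (fun ω => (f ω ^ 2 + g ω ^ 2) / 2) μ :=
    (hf.integrable_sq.add hg.integrable_sq).div_const 2
  refine h1.mono' (hf.aestronglyMeasurable.mul hg.aestronglyMeasurable) ?_
  filter_upwards with ω
  have h2 : |f ω| * |g ω| ≤ (f ω ^ 2 + g ω ^ 2) / 2 := by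
    nlinarith [sq_nonneg (|f ω| - |g ω|), sq_abs (f ω), sq_abs (g ω),
      abs_nonneg (f ω), abs_nonneg (g ω)]
  simpa [Real.norm_eq_abs, abs_mul] using h2

set_option maxHeartbeats 2000000 in
theorem stochastic_gronwall_upper {Ω : Type*} {m0 : MeasurableSpace Ω}
    (μ : Measure Ω) [IsProbabilityMeasure μ] (F : Filtration ℕ m0)
    (α x₀ x₀p : ℝ) (hα : 0 < α) (hx₀ : 0 < x₀) (hx₀p : x₀ ≤ x₀p)
    (X ξ Z : ℕ → Ω → ℝ)
    (hXadapted : Adapted F X) (hξadapted : Adapted F ξ) (hZadapted : Adapted F Z)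
    (hZL2 : ∀ t, MemLp (Z t) 2 μ)
    (hmds : ∀ t, μ[Z (t + 1)|F t] =ᵐ[μ] 0)
    (hX0 : ∀ ω, X 0 ω = x₀)
    (hrec : ∀ t ω, X (t + 1) ω = (1 + α) * X t ω + ξ (t + 1) ω + Z (t + 1) ω)
    (T : ℕ) (δ : ℝ) (hδ : δ ∈ Set.Ioo (0 : ℝ) 1)
    (δξ : ℝ) (hδξ : δξ ∈ Set.Ioo (0 : ℝ) 1)
    (Ξ σ : ℝ) (hΞ : 0 < Ξ) (hσ : 0 < σ)
    (hξbound : ∀ t, ∀ᵐ ω ∂μ,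
      (∀ s ≤ t, X s ω ≤ 2 * ((1 + α) ^ s * x₀p)) →
      (μ[Set.indicator {ω' | (1 + α) ^ t * Ξ < |ξ (t + 1) ω'|} (fun _ => (1 : ℝ))|F t]) ω
        ≤ δξ)
    (hvar : ∀ t, ∀ᵐ ω ∂μ,
      (∀ s ≤ t, X s ω ≤ 2 * ((1 + α) ^ s * x₀p)) →
      (μ[fun ω' => (Z (t + 1) ω') ^ 2|F t]) ω ≤ (1 + α) ^ t * σ ^ 2)
    (hΞle : Ξ ≤ x₀p / (4 * T)) (hσle : σ ^ 2 ≤ δ * α * x₀p ^ 2 / 16) :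
    ENNReal.ofReal (1 - δ - T * δξ)
      ≤ μ {ω | ∀ t, 1 ≤ t → t ≤ T → X t ω ≤ 2 * ((1 + α) ^ t * x₀p)} := by
  classical
  obtain ⟨hδ0, hδ1⟩ := hδ
  obtain ⟨hδξ0, hδξ1⟩ := hδξ
  have ha0 : (0:ℝ) < 1 + α := by linarith
  have ha1 : (1:ℝ) ≤ 1 + α := by linarith
  have hane : (1 + α : ℝ) ≠ 0 := ne_of_gt ha0
  have hapow : ∀ n : ℕ, (0:ℝ) < (1 + α) ^ n := fun n => pow_pos ha0 n
  have hx₀p0 : 0 < x₀p := lt_of_lt_of_le hx₀ hx₀p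
  have hT : 0 < T := by
    rcases Nat.eq_zero_or_pos T with h | h
    · exfalso; rw [h] at hΞle; norm_num at hΞle; linarith
    · exact h
  -- bad events and stopped sets
  set bad : ℕ → Ω → Prop := fun t ω =>
    2 * ((1 + α) ^ (t + 1) * x₀p) < X (t + 1) ω ∨ (1 + α) ^ t * Ξ < |ξ (t + 1) ω| with hbaddef
  set A : ℕ → Set Ω := fun s => {ω | ∀ r < s, ¬ bad r ω} with hAdef
  set Y : ℕ → Ω → ℝ := fun s =>
    (A s).indicator (fun ω => ((1 + α) ^ (s + 1))⁻¹ * Z (s + 1) ω) with hYdef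
  set S : ℕ → Ω → ℝ := fun n ω => ∑ s ∈ Finset.range n, Y s ω with hSdef
  -- measurability of bad sets
  have hbadm : ∀ t, MeasurableSet[F (t + 1)] {ω | bad t ω} := by
    intro t
    have h1 : MeasurableSet[F (t + 1)] {ω | 2 * ((1 + α) ^ (t + 1) * x₀p) < X (t + 1) ω} :=
      (hXadapted (t + 1)) measurableSet_Ioi
    have h2 : MeasurableSet[F (t + 1)] {ω | (1 + α) ^ t * Ξ < |ξ (t + 1) ω|} :=
      (measurable_abs.comp (hξadapted (t + 1))) measurableSet_Ioi
    have heq : {ω | bad t ω} = {ω | 2 * ((1 + α) ^ (t + 1) * x₀p) < X (t + 1) ω}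
        ∪ {ω | (1 + α) ^ t * Ξ < |ξ (t + 1) ω|} := by
      ext ω; simp only [hbaddef, Set.mem_setOf_eq, Set.mem_union]
    rw [heq]; exact h1.union h2
  have hAm : ∀ s, MeasurableSet[F s] (A s) := by
    intro s
    have heq : A s = ⋂ r ∈ Finset.range s, {ω | bad r ω}ᶜ := by
      ext ω; simp [hAdef]
    rw [heq]
    refine Finset.measurableSet_biInter _ fun r hr => ?_
    exact (F.mono (Nat.succ_le_of_lt (Finset.mem_range.mp hr)) _ (hbadm r)).compl
  have hAm0 : ∀ s, MeasurableSet (A s) := fun s => F.le s _ (hAm s)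
  -- on A s the process is good up to time s
  have hgoodA : ∀ s ω, ω ∈ A s → ∀ r ≤ s, X r ω ≤ 2 * ((1 + α) ^ r * x₀p) := by
    intro s ω hω r hr
    cases r with
    | zero => rw [hX0]; simp; nlinarith
    | succ q =>
      have hq : ¬ bad q ω := hω q (by omega)
      simp only [hbaddef] at hq
      push_neg at hq
      exact hq.1
  -- L² membership
  have hYL2 : ∀ s, MemLp (Y s) 2 μ := fun s =>
    MemLp.indicator (hAm0 s) ((hZL2 (s + 1)).const_mul _)
  have hSL2 : ∀ n, MemLp (S n) 2 μ := fun n =>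
    memLp_finset_sum _ fun s _ => hYL2 s
  have hYsm : ∀ s, StronglyMeasurable[F (s + 1)] (Y s) :=
    fun s => StronglyMeasurable.indicator
      ((hZadapted (s + 1)).stronglyMeasurable.const_mul _) (F.mono (Nat.le_succ s) _ (hAm s))
  have hSsm : ∀ n, StronglyMeasurable[F n] (S n) := by
    intro n
    refine Finset.stronglyMeasurable_fun_sum _ fun s hs => ?_
    exact (hYsm s).mono (F.mono (Nat.succ_le_of_lt (Finset.mem_range.mp hs)))
  -- diagonal bound
  have hdiag : ∀ s, ∫ ω, (Y s ω) ^ 2 ∂μ ≤ ((1 + α) ^ (s + 2))⁻¹ * σ ^ 2 := by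
    intro s
    have hZsq_int : Integrable (fun ω => (Z (s + 1) ω) ^ 2) μ := (hZL2 (s + 1)).integrable_sq
    have hptw : ∀ ω, (Y s ω) ^ 2
        = (A s).indicator (fun ω => (((1 + α) ^ (s + 1))⁻¹) ^ 2 * (Z (s + 1) ω) ^ 2) ω := by
      intro ω
      by_cases hω : ω ∈ A s
      · simp [hYdef, Set.indicator_of_mem hω, mul_pow]
      · simp [hYdef, Set.indicator_of_notMem hω]
    have htoReal1 : (μ (A s)).toReal ≤ 1 := by
      simpa using ENNReal.toReal_mono ENNReal.one_ne_top (prob_le_one (μ := μ) (s := A s))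
    calc ∫ ω, (Y s ω) ^ 2 ∂μ
        = ∫ ω, (A s).indicator (fun ω => (((1 + α) ^ (s + 1))⁻¹) ^ 2 * (Z (s + 1) ω) ^ 2) ω ∂μ :=
          integral_congr_ae (Filter.Eventually.of_forall hptw)
      _ = ∫ ω in A s, (((1 + α) ^ (s + 1))⁻¹) ^ 2 * (Z (s + 1) ω) ^ 2 ∂μ :=
          integral_indicator (hAm0 s)
      _ = (((1 + α) ^ (s + 1))⁻¹) ^ 2 * ∫ ω in A s, (Z (s + 1) ω) ^ 2 ∂μ :=
          integral_const_mul _ _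
      _ ≤ (((1 + α) ^ (s + 1))⁻¹) ^ 2 * ((1 + α) ^ s * σ ^ 2) := by
          refine mul_le_mul_of_nonneg_left ?_ (by positivity)
          have hcond : ∫ ω in A s, (Z (s + 1) ω) ^ 2 ∂μ
              = ∫ ω in A s, (μ[fun ω' => (Z (s + 1) ω') ^ 2|F s]) ω ∂μ :=
            (setIntegral_condExp (F.le s) hZsq_int (hAm s)).symm
          rw [hcond]
          calc ∫ ω in A s, (μ[fun ω' => (Z (s + 1) ω') ^ 2|F s]) ω ∂μ
              ≤ ∫ _ω in A s, (1 + α) ^ s * σ ^ 2 ∂μ := by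
                refine setIntegral_mono_on_ae integrable_condExp.integrableOn
                  (integrableOn_const (measure_ne_top μ _)) (hAm0 s) ?_
                filter_upwards [hvar s] with ω hω hmem
                exact hω (fun r hr => hgoodA s ω hmem r hr)
            _ = (μ (A s)).toReal * ((1 + α) ^ s * σ ^ 2) := by
                rw [setIntegral_const]; simp [smul_eq_mul, measureReal_def]
            _ ≤ 1 * ((1 + α) ^ s * σ ^ 2) :=
                mul_le_mul_of_nonneg_right htoReal1 (by positivity)
            _ = (1 + α) ^ s * σ ^ 2 := one_mul _
      _ = ((1 + α) ^ (s + 2))⁻¹ * σ ^ 2 := by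
          rw [← inv_pow]
          rw [← pow_mul, show (s + 1) * 2 = s + (s + 2) by ring, pow_add, inv_pow, inv_pow]
          have h := pow_pos ha0 s
          field_simp
  -- cross terms vanish
  have hcross : ∀ n, ∫ ω, S n ω * Y n ω ∂μ = 0 := by
    intro n
    set g : Ω → ℝ := fun ω => S n ω * (A n).indicator (fun _ => ((1 + α) ^ (n + 1))⁻¹) ω with hgdef
    have hptw : ∀ ω, S n ω * Y n ω = g ω * Z (n + 1) ω := by
      intro ω
      by_cases hω : ω ∈ A n
      · simp only [hgdef, hYdef, Set.indicator_of_mem hω]; ring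
      · simp [hgdef, hYdef, Set.indicator_of_notMem hω]
    have hgsm : StronglyMeasurable[F n] g :=
      (hSsm n).mul (stronglyMeasurable_const.indicator (hAm n))
    have hint1 : Integrable (fun ω => S n ω * Y n ω) μ := sg_integrable_mul (hSL2 n) (hYL2 n)
    have hint2 : Integrable (g * Z (n + 1)) μ :=
      hint1.congr (Filter.Eventually.of_forall fun ω => hptw ω)
    have hintZ : Integrable (Z (n + 1)) μ := (hZL2 (n + 1)).integrable one_le_two
    have key : μ[g * Z (n + 1)|F n] =ᵐ[μ] g * μ[Z (n + 1)|F n] :=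
      condExp_mul_of_stronglyMeasurable_left hgsm hint2 hintZ
    have h0 : μ[g * Z (n + 1)|F n] =ᵐ[μ] 0 := by
      refine key.trans ?_
      filter_upwards [hmds n] with ω hω
      simp [Pi.mul_apply, hω]
    calc ∫ ω, S n ω * Y n ω ∂μ = ∫ ω, (g * Z (n + 1)) ω ∂μ :=
          integral_congr_ae (Filter.Eventually.of_forall fun ω => hptw ω)
      _ = ∫ ω, (μ[g * Z (n + 1)|F n]) ω ∂μ := (integral_condExp (F.le n)).symm
      _ = ∫ _ω, (0 : Ω → ℝ) _ω ∂μ := integral_congr_ae h0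
      _ = 0 := by simp
  -- second moment of partial sums
  have hS2 : ∀ n, ∫ ω, (S n ω) ^ 2 ∂μ ≤ σ ^ 2 * ∑ s ∈ Finset.range n, ((1 + α) ^ (s + 2))⁻¹ := by
    intro n
    induction n with
    | zero => simp [hSdef]
    | succ n ih =>
      have hexp : ∀ ω, (S (n + 1) ω) ^ 2
          = (S n ω) ^ 2 + (2 * (S n ω * Y n ω) + (Y n ω) ^ 2) := by
        intro ω
        have hsucc : S (n + 1) ω = S n ω + Y n ω := by
          simp [hSdef, Finset.sum_range_succ]
        rw [hsucc]; ring
      have hintS2 : Integrable (fun ω => (S n ω) ^ 2) μ := (hSL2 n).integrable_sq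
      have hintSY : Integrable (fun ω => S n ω * Y n ω) μ := sg_integrable_mul (hSL2 n) (hYL2 n)
      have hintY2 : Integrable (fun ω => (Y n ω) ^ 2) μ := (hYL2 n).integrable_sq
      calc ∫ ω, (S (n + 1) ω) ^ 2 ∂μ
          = ∫ ω, ((S n ω) ^ 2 + (2 * (S n ω * Y n ω) + (Y n ω) ^ 2)) ∂μ :=
            integral_congr_ae (Filter.Eventually.of_forall hexp)
        _ = ∫ ω, (S n ω) ^ 2 ∂μ + (∫ ω, (2 * (S n ω * Y n ω) + (Y n ω) ^ 2) ∂μ) :=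
            integral_add hintS2 ((hintSY.const_mul 2).add hintY2)
        _ = ∫ ω, (S n ω) ^ 2 ∂μ + (2 * ∫ ω, S n ω * Y n ω ∂μ + ∫ ω, (Y n ω) ^ 2 ∂μ) := by
            rw [integral_add (hintSY.const_mul 2) hintY2, integral_const_mul]
        _ = ∫ ω, (S n ω) ^ 2 ∂μ + ∫ ω, (Y n ω) ^ 2 ∂μ := by rw [hcross n]; ring
        _ ≤ σ ^ 2 * ∑ s ∈ Finset.range n, ((1 + α) ^ (s + 2))⁻¹ + ((1 + α) ^ (n + 2))⁻¹ * σ ^ 2 :=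
            add_le_add ih (hdiag n)
        _ = σ ^ 2 * ∑ s ∈ Finset.range (n + 1), ((1 + α) ^ (s + 2))⁻¹ := by
            rw [Finset.sum_range_succ]; ring
  -- geometric series bound
  have hgeom : ∑ s ∈ Finset.range T, ((1 + α) ^ (s + 2))⁻¹ ≤ 1 / α := by
    have hr0 : (0:ℝ) ≤ (1 + α)⁻¹ := by positivity
    have hr1 : ((1 + α)⁻¹ : ℝ) < 1 := by
      rw [inv_lt_one_iff₀]; right; linarith
    have hterm : ∀ s : ℕ, ((1 + α) ^ (s + 2))⁻¹ = ((1 + α) ^ 2)⁻¹ * ((1 + α)⁻¹) ^ s := by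
      intro s
      rw [pow_add, mul_inv, ← inv_pow]
      ring
    have hsum : ∑ s ∈ Finset.range T, ((1 + α)⁻¹) ^ s ≤ (1 - (1 + α)⁻¹)⁻¹ := by
      rw [geom_sum_eq (ne_of_lt hr1) T]
      rw [div_le_iff_of_neg (by linarith : (1 + α)⁻¹ - 1 < 0)]
      have heq : (1 - (1 + α)⁻¹)⁻¹ * ((1 + α)⁻¹ - 1) = -1 := by
        have h1r : (0:ℝ) < 1 - (1 + α)⁻¹ := by linarith
        field_simp
        simp [hα.ne']
      rw [heq]
      have := pow_nonneg hr0 T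
      linarith
    calc ∑ s ∈ Finset.range T, ((1 + α) ^ (s + 2))⁻¹
        = ((1 + α) ^ 2)⁻¹ * ∑ s ∈ Finset.range T, ((1 + α)⁻¹) ^ s := by
          rw [Finset.mul_sum]
          exact Finset.sum_congr rfl fun s _ => hterm s
      _ ≤ ((1 + α) ^ 2)⁻¹ * (1 - (1 + α)⁻¹)⁻¹ :=
          mul_le_mul_of_nonneg_left hsum (by positivity)
      _ = 1 / (α * (1 + α)) := by
          have h1r : (1 - (1 + α)⁻¹ : ℝ) = α / (1 + α) := by field_simp; ring
          rw [h1r]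
          field_simp
      _ ≤ 1 / α := by
          refine one_div_le_one_div_of_le hα ?_
          nlinarith
  -- total second moment bound
  have hM2 : ∫ ω, (S T ω) ^ 2 ∂μ ≤ δ * x₀p ^ 2 / 16 := by
    calc ∫ ω, (S T ω) ^ 2 ∂μ
        ≤ σ ^ 2 * ∑ s ∈ Finset.range T, ((1 + α) ^ (s + 2))⁻¹ := hS2 T
      _ ≤ σ ^ 2 * (1 / α) := mul_le_mul_of_nonneg_left hgeom (by positivity)
      _ ≤ (δ * α * x₀p ^ 2 / 16) * (1 / α) :=
          mul_le_mul_of_nonneg_right hσle (by positivity)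
      _ = δ * x₀p ^ 2 / 16 := by field_simp
  -- Chebyshev
  set D : Set Ω := {ω | x₀p ^ 2 / 4 ≤ (S T ω) ^ 2} with hDdef
  have hDm : MeasurableSet D :=
    ((((hSsm T).mono (F.le T)).measurable).pow_const 2) measurableSet_Ici
  have hcheb : (μ D).toReal ≤ δ / 4 := by
    have h := mul_meas_ge_le_integral_of_nonneg (μ := μ) (f := fun ω => (S T ω) ^ 2)
      (ae_of_all μ fun ω => sq_nonneg (S T ω)) (hSL2 T).integrable_sq (x₀p ^ 2 / 4)
    have hε : (0:ℝ) < x₀p ^ 2 / 4 := by positivity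
    have h2 : x₀p ^ 2 / 4 * (μ D).toReal ≤ δ * x₀p ^ 2 / 16 := le_trans h hM2
    nlinarith [ENNReal.toReal_nonneg (a := μ D)]
  -- ξ bad events
  set B : ℕ → Set Ω := fun t => A t ∩ {ω | (1 + α) ^ t * Ξ < |ξ (t + 1) ω|} with hBdef
  have hbigm : ∀ t, MeasurableSet {ω | (1 + α) ^ t * Ξ < |ξ (t + 1) ω|} := fun t =>
    F.le (t + 1) _ ((measurable_abs.comp (hξadapted (t + 1))) measurableSet_Ioi)
  have hEξ : ∀ t, (μ (B t)).toReal ≤ δξ := by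
    intro t
    set I : Ω → ℝ := Set.indicator {ω' | (1 + α) ^ t * Ξ < |ξ (t + 1) ω'|} (fun _ => (1:ℝ))
      with hIdef
    have hIint : Integrable I μ := (integrable_const (1:ℝ)).indicator (hbigm t)
    have h1 : (μ (B t)).toReal = ∫ ω in A t, I ω ∂μ := by
      rw [← integral_indicator (hAm0 t)]
      rw [hIdef, Set.indicator_indicator]
      rw [integral_indicator_const (1:ℝ) ((hAm0 t).inter (hbigm t))]
      simp [hBdef, measureReal_def]
    have h2 : ∫ ω in A t, I ω ∂μ = ∫ ω in A t, (μ[I|F t]) ω ∂μ :=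
      (setIntegral_condExp (F.le t) hIint (hAm t)).symm
    have h3 : ∫ ω in A t, (μ[I|F t]) ω ∂μ ≤ ∫ _ω in A t, δξ ∂μ := by
      refine setIntegral_mono_on_ae integrable_condExp.integrableOn
        (integrableOn_const (measure_ne_top μ _)) (hAm0 t) ?_
      filter_upwards [hξbound t] with ω hω hmem
      exact hω (fun r hr => hgoodA t ω hmem r hr)
    have h4 : ∫ _ω in A t, δξ ∂μ ≤ δξ := by
      rw [setIntegral_const, smul_eq_mul]
      have htoReal1 : (μ (A t)).toReal ≤ 1 := by
        simpa using ENNReal.toReal_mono ENNReal.one_ne_top (prob_le_one (μ := μ) (s := A t))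
      calc (μ (A t)).toReal * δξ
          ≤ 1 * δξ := mul_le_mul_of_nonneg_right htoReal1 (le_of_lt hδξ0)
        _ = δξ := one_mul _
    rw [h1, h2]
    exact le_trans h3 h4
  -- the explicit formula for X
  have hXf : ∀ t ω, X t ω = (1 + α) ^ t *
      (x₀ + ∑ s ∈ Finset.range t, ((1 + α) ^ (s + 1))⁻¹ * (ξ (s + 1) ω + Z (s + 1) ω)) := by
    intro t ω
    induction t with
    | zero => simp [hX0]
    | succ t ih =>
      rw [hrec t ω, ih, Finset.sum_range_succ]
      have hp : ((1 + α) ^ (t + 1) : ℝ) ≠ 0 := ne_of_gt (hapow (t + 1))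
      field_simp
      ring
  -- the inclusion of the bad event
  set Sgood : Set Ω := {ω | ∀ t, 1 ≤ t → t ≤ T → X t ω ≤ 2 * ((1 + α) ^ t * x₀p)} with hSgdef
  have hSgm : MeasurableSet Sgood := by
    have heq : Sgood = ⋂ t, ⋂ (_ : 1 ≤ t), ⋂ (_ : t ≤ T),
        {ω | X t ω ≤ 2 * ((1 + α) ^ t * x₀p)} := by
      ext ω; simp [hSgdef]
    rw [heq]
    exact MeasurableSet.iInter fun t => MeasurableSet.iInter fun _ =>
      MeasurableSet.iInter fun _ =>
        F.le t _ ((hXadapted t) measurableSet_Iic)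
  have hsub : Sgoodᶜ ⊆ (⋃ t ∈ Finset.range T, B t) ∪ D := by
    intro ω hω
    simp only [hSgdef, Set.mem_compl_iff, Set.mem_setOf_eq] at hω
    push_neg at hω
    obtain ⟨t, ht1, htT, hXt⟩ := hω
    have hex : ∃ r, r < T ∧ bad r ω := by
      refine ⟨t - 1, by omega, ?_⟩
      simp only [hbaddef]
      left
      have heq : t - 1 + 1 = t := by omega
      rw [heq]
      exact hXt
    set t0 := Nat.find hex with ht0def
    have ht0 : t0 < T ∧ bad t0 ω := Nat.find_spec hex
    have ht0min : ∀ r < t0, ¬(r < T ∧ bad r ω) := fun r hr => Nat.find_min hex hr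
    have hωA : ω ∈ A t0 := fun r hr hb => ht0min r hr ⟨lt_trans hr ht0.1, hb⟩
    by_cases hbig : (1 + α) ^ t0 * Ξ < |ξ (t0 + 1) ω|
    · left
      exact Set.mem_biUnion (Finset.mem_range.mpr ht0.1) ⟨hωA, hbig⟩
    · right
      have hXbig : 2 * ((1 + α) ^ (t0 + 1) * x₀p) < X (t0 + 1) ω := by
        have hb := ht0.2
        simp only [hbaddef] at hb
        rcases hb with h | h
        · exact h
        · exact absurd h hbig
      have hξb : ∀ s ≤ t0, |ξ (s + 1) ω| ≤ (1 + α) ^ s * Ξ := by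
        intro s hs
        rcases eq_or_lt_of_le hs with h | h
        · subst h; exact not_lt.mp hbig
        · have hns := hωA s h
          simp only [hbaddef] at hns
          push_neg at hns
          exact hns.2
      have hsumξ : ∑ s ∈ Finset.range (t0 + 1), ((1 + α) ^ (s + 1))⁻¹ * ξ (s + 1) ω
          ≤ x₀p / 4 := by
        have hterm : ∀ s ∈ Finset.range (t0 + 1),
            ((1 + α) ^ (s + 1))⁻¹ * ξ (s + 1) ω ≤ Ξ := by
          intro s hs
          have hsle : s ≤ t0 := Nat.lt_succ_iff.mp (Finset.mem_range.mp hs)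
          have h1 : ((1 + α) ^ (s + 1))⁻¹ * ξ (s + 1) ω
              ≤ ((1 + α) ^ (s + 1))⁻¹ * |ξ (s + 1) ω| :=
            mul_le_mul_of_nonneg_left (le_abs_self _) (by positivity)
          have h2 : ((1 + α) ^ (s + 1))⁻¹ * |ξ (s + 1) ω|
              ≤ ((1 + α) ^ (s + 1))⁻¹ * ((1 + α) ^ s * Ξ) :=
            mul_le_mul_of_nonneg_left (hξb s hsle) (by positivity)
          have h3 : ((1 + α) ^ (s + 1))⁻¹ * ((1 + α) ^ s * Ξ) = Ξ / (1 + α) := by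
            rw [pow_succ]
            field_simp
          have h4 : Ξ / (1 + α) ≤ Ξ := div_le_self hΞ.le ha1
          linarith
        have hTpos : (0:ℝ) < (T:ℝ) := by exact_mod_cast hT
        calc ∑ s ∈ Finset.range (t0 + 1), ((1 + α) ^ (s + 1))⁻¹ * ξ (s + 1) ω
            ≤ ∑ _s ∈ Finset.range (t0 + 1), Ξ := Finset.sum_le_sum hterm
          _ = (t0 + 1 : ℕ) * Ξ := by rw [Finset.sum_const, Finset.card_range, nsmul_eq_mul]
          _ ≤ (T:ℝ) * Ξ := by
              refine mul_le_mul_of_nonneg_right ?_ hΞ.le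
              exact_mod_cast Nat.succ_le_of_lt ht0.1
          _ ≤ (T:ℝ) * (x₀p / (4 * T)) := mul_le_mul_of_nonneg_left hΞle hTpos.le
          _ = x₀p / 4 := by field_simp
      have hMval : S T ω
          = ∑ s ∈ Finset.range (t0 + 1), ((1 + α) ^ (s + 1))⁻¹ * Z (s + 1) ω := by
        have hsplit2 : ∑ s ∈ Finset.range (t0 + 1), Y s ω + ∑ s ∈ Finset.Ico (t0 + 1) T, Y s ω
            = ∑ s ∈ Finset.range T, Y s ω :=
          Finset.sum_range_add_sum_Ico _ (Nat.succ_le_of_lt ht0.1)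
        have hz : ∑ s ∈ Finset.Ico (t0 + 1) T, Y s ω = 0 := by
          refine Finset.sum_eq_zero fun s hs => ?_
          have h1 : t0 < s := (Finset.mem_Ico.mp hs).1
          have hnA : ω ∉ A s := fun hA' => hA' t0 h1 ht0.2
          simp [hYdef, Set.indicator_of_notMem hnA]
        have hy : ∀ s ∈ Finset.range (t0 + 1),
            Y s ω = ((1 + α) ^ (s + 1))⁻¹ * Z (s + 1) ω := by
          intro s hs
          have hsle : s ≤ t0 := Nat.lt_succ_iff.mp (Finset.mem_range.mp hs)
          have hmem : ω ∈ A s := fun r hr => hωA r (lt_of_lt_of_le hr hsle)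
          simp [hYdef, Set.indicator_of_mem hmem]
        calc S T ω = ∑ s ∈ Finset.range T, Y s ω := rfl
          _ = ∑ s ∈ Finset.range (t0 + 1), Y s ω + ∑ s ∈ Finset.Ico (t0 + 1) T, Y s ω :=
              hsplit2.symm
          _ = ∑ s ∈ Finset.range (t0 + 1), Y s ω := by rw [hz, add_zero]
          _ = ∑ s ∈ Finset.range (t0 + 1), ((1 + α) ^ (s + 1))⁻¹ * Z (s + 1) ω :=
              Finset.sum_congr rfl hy
      have hdiv : 2 * x₀p < x₀ + ∑ s ∈ Finset.range (t0 + 1),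
          ((1 + α) ^ (s + 1))⁻¹ * (ξ (s + 1) ω + Z (s + 1) ω) := by
        have hp := hapow (t0 + 1)
        rw [hXf (t0 + 1) ω] at hXbig
        have h' : (1 + α) ^ (t0 + 1) * (2 * x₀p) < (1 + α) ^ (t0 + 1) *
            (x₀ + ∑ s ∈ Finset.range (t0 + 1),
              ((1 + α) ^ (s + 1))⁻¹ * (ξ (s + 1) ω + Z (s + 1) ω)) := by
          calc (1 + α) ^ (t0 + 1) * (2 * x₀p) = 2 * ((1 + α) ^ (t0 + 1) * x₀p) := by ring
            _ < _ := hXbig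
        exact (mul_lt_mul_iff_right₀ hp).mp h'
      have hsplit : ∑ s ∈ Finset.range (t0 + 1),
          ((1 + α) ^ (s + 1))⁻¹ * (ξ (s + 1) ω + Z (s + 1) ω)
          = (∑ s ∈ Finset.range (t0 + 1), ((1 + α) ^ (s + 1))⁻¹ * ξ (s + 1) ω)
            + ∑ s ∈ Finset.range (t0 + 1), ((1 + α) ^ (s + 1))⁻¹ * Z (s + 1) ω := by
        rw [← Finset.sum_add_distrib]
        exact Finset.sum_congr rfl fun s _ => by ring
      have hMbig : x₀p / 2 ≤ S T ω := by
        rw [hMval]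
        rw [hsplit] at hdiv
        linarith
      show ω ∈ D
      simp only [hDdef, Set.mem_setOf_eq]
      nlinarith
  -- final measure computation
  have hμB : ∀ t, μ (B t) ≤ ENNReal.ofReal δξ := by
    intro t
    rw [← ENNReal.ofReal_toReal (measure_ne_top μ (B t))]
    exact ENNReal.ofReal_le_ofReal (hEξ t)
  have hμD : μ D ≤ ENNReal.ofReal (δ / 4) := by
    rw [← ENNReal.ofReal_toReal (measure_ne_top μ D)]
    exact ENNReal.ofReal_le_ofReal hcheb
  have hcomp : μ Sgoodᶜ ≤ ENNReal.ofReal ((T:ℝ) * δξ + δ / 4) := by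
    calc μ Sgoodᶜ ≤ μ ((⋃ t ∈ Finset.range T, B t) ∪ D) := measure_mono hsub
      _ ≤ μ (⋃ t ∈ Finset.range T, B t) + μ D := measure_union_le _ _
      _ ≤ (∑ t ∈ Finset.range T, μ (B t)) + μ D :=
          add_le_add_left (measure_biUnion_finset_le _ _) _
      _ ≤ (∑ _t ∈ Finset.range T, ENNReal.ofReal δξ) + ENNReal.ofReal (δ / 4) :=
          add_le_add (Finset.sum_le_sum fun t _ => hμB t) hμD
      _ = ENNReal.ofReal ((T:ℝ) * δξ) + ENNReal.ofReal (δ / 4) := by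
          rw [Finset.sum_const, Finset.card_range, nsmul_eq_mul,
            ENNReal.ofReal_mul (Nat.cast_nonneg T), ENNReal.ofReal_natCast]
      _ = ENNReal.ofReal ((T:ℝ) * δξ + δ / 4) :=
          (ENNReal.ofReal_add (by positivity) (by positivity)).symm
  calc ENNReal.ofReal (1 - δ - T * δξ)
      ≤ ENNReal.ofReal (1 - ((T:ℝ) * δξ + δ / 4)) := ENNReal.ofReal_le_ofReal (by linarith)
    _ = 1 - ENNReal.ofReal ((T:ℝ) * δξ + δ / 4) := by
        rw [ENNReal.ofReal_sub _ (by positivity), ENNReal.ofReal_one]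
    _ ≤ 1 - μ Sgoodᶜ := tsub_le_tsub_left hcomp 1
    _ ≤ μ Sgood := by
        rw [tsub_le_iff_right, measure_add_measure_compl hSgm, measure_univ]

end
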